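/- Fix $0 < \alpha < \beta \leq 1$, an integer $d \geq 2$, $\sigma > 0$, and constants $c_1, c_2 > 0$. For each $p$ in an increasing sequence, let $\mathbf x^{(p)} \in \{0,1\}^p$ be a nonzero pattern satisfying $\|\mathbf x^{(p)}\|_0 \geq c_1 p^{1-\alpha}$, let $\mathbb B_p$ be a $p\times p$ orthogonal matrix satisfying $\|\mathbb B_p^T \mathbf x^{(p)}\|_0 \leq c_2 (\log_d p)^2 p^{1-\beta}$, and let $\mathbf y = \mu_p \mathbf x^{(p)} + \boldsymbol\epsilon$ with $\boldsymbol\epsilon$ having i.i.d. $\mathcal N(0,\sigma^2)$ entries. Fix $c > 0$ and consider the test that declares a signal present when $\max_i |\mathbf b_i^T \mathbf y| > t_p$ with $t_p = \sqrt{2\sigma^2(1+c)\log p}$. Then the false alarm probability (under $\mu_p = 0$) tends to $0$ as $p \to \infty$, and for every $\kappa' \in (0, (\beta-\alpha)/2)$, if $\mu_p \geq p^{-\kappa'}\sqrt{2\sigma^2\log p}$ for all $p$, the miss probability (under signal present) also tends to $0$ as $p \to \infty$. In particular, signals with strength polynomially below the canonical-domain detection threshold $\sqrt{2\sigma^2\log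 p}$ are reliably detectable. -/

import Mathlib

open MeasureTheory ProbabilityTheory Finset Filter
open scoped ENNReal NNReal


lemma gauss_pdf_shift (v : NNReal) (hv : v ≠ 0) (t x : ℝ) :
    Real.exp (t * x) * gaussianPDFReal 0 v x
      = Real.exp ((v:ℝ) * t ^ 2 / 2) * gaussianPDFReal ((v:ℝ) * t) v x := by
  have hv' : (0:ℝ) < v := lt_of_le_of_ne v.coe_nonneg (by exact_mod_cast (Ne.symm hv))
  simp only [gaussianPDFReal]
  rw [mul_left_comm, mul_left_comm (Real.exp _), ← Real.exp_add, ← Real.exp_add]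
  congr 1
  field_simp
  ring

lemma mgf_gauss {Ω : Type*} [MeasurableSpace Ω] {μ : Measure Ω} [IsProbabilityMeasure μ]
    {X : Ω → ℝ} (hX : Measurable X) {v : NNReal}
    (hmap : Measure.map X μ = gaussianReal 0 v) (t : ℝ) :
    Integrable (fun ω => Real.exp (t * X ω)) μ ∧
      mgf X μ t = Real.exp ((v:ℝ) * t ^ 2 / 2) := by
  have hg : Measurable fun x : ℝ => Real.exp (t * x) := by fun_prop
  have hint : Integrable (fun x : ℝ => Real.exp (t * x)) (gaussianReal 0 v) := by
    by_cases hv : v = 0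
    · rw [hv, gaussianReal_zero_var]
      exact (integrable_const (Real.exp (t * 0))).congr
        (ae_eq_dirac (fun x : ℝ => Real.exp (t * x))).symm
    · rw [gaussianReal_of_var_ne_zero _ hv, gaussianPDF_def]
      rw [integrable_withDensity_iff ((measurable_gaussianPDFReal 0 v).ennreal_ofReal) (Filter.Eventually.of_forall fun x => ENNReal.ofReal_lt_top)]
      have : (fun x : ℝ => Real.exp (t * x) * (ENNReal.ofReal (gaussianPDFReal 0 v x)).toReal)
          = fun x => Real.exp ((v:ℝ) * t ^ 2 / 2) * gaussianPDFReal ((v:ℝ) * t) v x := by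
        funext x
        rw [ENNReal.toReal_ofReal (gaussianPDFReal_nonneg _ _ _), gauss_pdf_shift v hv]
      rw [this]
      exact (integrable_gaussianPDFReal _ _).const_mul _
  constructor
  · have := (integrable_map_measure hg.aestronglyMeasurable hX.aemeasurable).mp
      (by rwa [hmap])
    exact this
  · rw [mgf, ← integral_map hX.aemeasurable hg.aestronglyMeasurable, hmap]
    by_cases hv : v = 0
    · simp [hv, gaussianReal_zero_var]
    · rw [gaussianReal_of_var_ne_zero _ hv, gaussianPDF_def]
      have hd : (fun x => ENNReal.ofReal (gaussianPDFReal 0 v x))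
          = fun x => ((Real.toNNReal (gaussianPDFReal 0 v x) : NNReal) : ENNReal) := by
        funext x; rfl
      rw [hd, integral_withDensity_eq_integral_smul
        ((measurable_gaussianPDFReal 0 v).real_toNNReal) _]
      have : (fun x : ℝ => Real.toNNReal (gaussianPDFReal 0 v x) • Real.exp (t * x))
          = fun x => Real.exp ((v:ℝ) * t ^ 2 / 2) * gaussianPDFReal ((v:ℝ) * t) v x := by
        funext x
        rw [NNReal.smul_def, smul_eq_mul, Real.coe_toNNReal _ (gaussianPDFReal_nonneg _ _ _),
          mul_comm, gauss_pdf_shift v hv]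
      rw [this, integral_const_mul, integral_gaussianPDFReal_eq_one _ hv, mul_one]

lemma tail_lin {Ω : Type*} [MeasurableSpace Ω] {μ : Measure Ω} [IsProbabilityMeasure μ]
    {σ : ℝ} (hσ : 0 < σ) {n : ℕ} {ε : Fin n → Ω → ℝ} (hmeas : ∀ i, Measurable (ε i))
    (hindep : iIndepFun ε μ)
    (hdist : ∀ i, Measure.map (ε i) μ = gaussianReal 0 ⟨σ ^ 2, sq_nonneg σ⟩)
    (a : Fin n → ℝ) (ha : ∑ j, a j ^ 2 = 1) {u : ℝ} (hu : 0 ≤ u) :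
    μ {ω | u ≤ ∑ j, a j * ε j ω} ≤ ENNReal.ofReal (Real.exp (-u ^ 2 / (2 * σ ^ 2))) := by
  have hσ2 : (0:ℝ) < σ ^ 2 := by positivity
  set t : ℝ := u / σ ^ 2 with ht_def
  have ht : 0 ≤ t := div_nonneg hu hσ2.le
  have hcoe : ((⟨σ ^ 2, sq_nonneg σ⟩ : NNReal) : ℝ) = σ ^ 2 := rfl
  have key : ∀ (j : Fin n) (s : ℝ), Integrable (fun ω => Real.exp (s * ε j ω)) μ ∧
      mgf (ε j) μ s = Real.exp (σ ^ 2 * s ^ 2 / 2) := by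
    intro j s
    exact mgf_gauss (hmeas j) (hdist j) s
  set X : Fin n → Ω → ℝ := fun j ω => a j * ε j ω with hX_def
  have hXmeas : ∀ j, Measurable (X j) := fun j => (hmeas j).const_mul _
  have hXindep : iIndepFun X μ :=
    hindep.comp (fun j x => a j * x) (fun j => measurable_const_mul _)
  have hrw : ∀ j, (fun ω => Real.exp (t * X j ω)) = fun ω => Real.exp ((t * a j) * ε j ω) := by
    intro j; funext ω; rw [hX_def]; ring_nf
  have hXint : ∀ j ∈ Finset.univ, Integrable (fun ω => Real.exp (t * X j ω)) μ := by
    intro j _; rw [hrw j]; exact (key j (t * a j)).1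
  have hmgfX : ∀ j, mgf (X j) μ t = Real.exp (σ ^ 2 * (t * a j) ^ 2 / 2) := by
    intro j
    have : mgf (X j) μ t = mgf (ε j) μ (t * a j) := by
      unfold mgf; rw [← hrw j]
    rw [this, (key j (t * a j)).2]
  have hZ : (fun ω => ∑ j, a j * ε j ω) = ∑ j, X j := by
    funext ω; rw [Finset.sum_apply]
  have hint : Integrable (fun ω => Real.exp (t * (∑ j, X j) ω)) μ :=
    hXindep.integrable_exp_mul_sum hXmeas hXint
  have hcher := measure_ge_le_exp_mul_mgf (μ := μ) (X := ∑ j, X j) u ht hint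
  rw [hXindep.mgf_sum hXmeas Finset.univ] at hcher
  have hprod : ∏ j, mgf (X j) μ t = Real.exp (σ ^ 2 * t ^ 2 / 2) := by
    have : ∀ j ∈ Finset.univ, mgf (X j) μ t = Real.exp (σ ^ 2 * t ^ 2 / 2 * a j ^ 2) := by
      intro j _; rw [hmgfX j]; ring_nf
    rw [Finset.prod_congr rfl this, ← Real.exp_sum, ← Finset.mul_sum, ha, mul_one]
  rw [hprod] at hcher
  have hval : Real.exp (-t * u) * Real.exp (σ ^ 2 * t ^ 2 / 2)
      = Real.exp (-u ^ 2 / (2 * σ ^ 2)) := by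
    rw [← Real.exp_add]
    congr 1
    rw [ht_def]; field_simp; ring
  rw [hval] at hcher
  rw [ENNReal.le_ofReal_iff_toReal_le (measure_ne_top _ _) (Real.exp_nonneg _)]
  have hset : {ω | u ≤ ∑ j, a j * ε j ω} = {ω | u ≤ (∑ j, X j) ω} := by
    ext ω; simp only [Set.mem_setOf_eq, Finset.sum_apply]; exact Iff.rfl
  rw [hset]
  exact hcher

lemma tail_abs {Ω : Type*} [MeasurableSpace Ω] {μ : Measure Ω} [IsProbabilityMeasure μ]
    {σ : ℝ} (hσ : 0 < σ) {n : ℕ} {ε : Fin n → Ω → ℝ} (hmeas : ∀ i, Measurable (ε i))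
    (hindep : iIndepFun ε μ)
    (hdist : ∀ i, Measure.map (ε i) μ = gaussianReal 0 ⟨σ ^ 2, sq_nonneg σ⟩)
    (a : Fin n → ℝ) (ha : ∑ j, a j ^ 2 = 1) {u : ℝ} (hu : 0 ≤ u) :
    μ {ω | u ≤ |∑ j, a j * ε j ω|} ≤ ENNReal.ofReal (2 * Real.exp (-u ^ 2 / (2 * σ ^ 2))) := by
  have hsub : {ω | u ≤ |∑ j, a j * ε j ω|} ⊆
      {ω | u ≤ ∑ j, a j * ε j ω} ∪ {ω | u ≤ ∑ j, (-a j) * ε j ω} := by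
    intro ω hω
    simp only [Set.mem_setOf_eq] at hω
    rcases le_abs.mp hω with h | h
    · exact Or.inl h
    · right
      simpa [Finset.sum_neg_distrib, neg_mul] using h
  have h1 := tail_lin hσ hmeas hindep hdist a ha hu
  have h2 := tail_lin hσ hmeas hindep hdist (fun j => -a j) (by simpa using ha) hu
  calc μ {ω | u ≤ |∑ j, a j * ε j ω|} ≤ _ := measure_mono hsub
    _ ≤ _ + _ := measure_union_le _ _
    _ ≤ ENNReal.ofReal (Real.exp (-u ^ 2 / (2 * σ ^ 2)))
        + ENNReal.ofReal (Real.exp (-u ^ 2 / (2 * σ ^ 2))) := add_le_add h1 h2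
    _ = ENNReal.ofReal (2 * Real.exp (-u ^ 2 / (2 * σ ^ 2))) := by
        rw [← ENNReal.ofReal_add (Real.exp_nonneg _) (Real.exp_nonneg _)]
        congr 1; ring

lemma col_norm {p : ℕ} (B : Matrix (Fin p) (Fin p) ℝ) (hB : B.transpose * B = 1) (i : Fin p) :
    ∑ j, (B j i) ^ 2 = 1 := by
  have := congrFun (congrFun hB i) i
  rw [Matrix.mul_apply, Matrix.one_apply_eq] at this
  simpa [Matrix.transpose_apply, sq] using this

lemma sumsq_coeff {p : ℕ} (B : Matrix (Fin p) (Fin p) ℝ) (hB : B.transpose * B = 1)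
    (x : Fin p → ℝ) (hx01 : ∀ i, x i = 0 ∨ x i = 1) :
    ∑ i, (∑ j, B j i * x j) ^ 2
      = ((Finset.univ.filter fun i => x i ≠ 0).card : ℝ) := by
  have hBBt : B * B.transpose = 1 := mul_eq_one_comm.mp hB
  have key : ∀ j l : Fin p, ∑ i, B j i * B l i = if j = l then (1:ℝ) else 0 := by
    intro j l
    have := congrFun (congrFun hBBt j) l
    rw [Matrix.mul_apply, Matrix.one_apply] at this
    simpa [Matrix.transpose_apply] using this
  have step1 : ∑ i, (∑ j, B j i * x j) ^ 2
      = ∑ j, ∑ l, (x j * x l) * ∑ i, B j i * B l i := by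
    simp_rw [sq, Finset.sum_mul_sum, Finset.mul_sum]
    rw [Finset.sum_comm]
    refine Finset.sum_congr rfl fun j _ => ?_
    rw [Finset.sum_comm]
    refine Finset.sum_congr rfl fun l _ => ?_
    refine Finset.sum_congr rfl fun i _ => ?_
    ring
  rw [step1]
  have step2 : ∑ j, ∑ l, (x j * x l) * ∑ i, B j i * B l i = ∑ j, x j := by
    refine Finset.sum_congr rfl fun j _ => ?_
    rw [Finset.sum_congr rfl fun l (_ : l ∈ Finset.univ) => by rw [key j l]]
    simp only [mul_ite, mul_one, mul_zero, Finset.sum_ite_eq, Finset.mem_univ, if_true]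
    rcases hx01 j with h | h <;> simp [h]
  rw [step2, ← Finset.sum_filter_of_ne (p := fun i => x i ≠ 0) (fun i _ hi => hi)]
  rw [Finset.sum_congr rfl (fun i hi => ?_), Finset.sum_const, nsmul_eq_mul, mul_one]
  rcases hx01 i with h | h
  · exact absurd h (Finset.mem_filter.mp hi).2
  · exact h

lemma exists_big_coeff {p : ℕ} (cf : Fin p → ℝ) {N K : ℝ} (hN : ∑ i, cf i ^ 2 = N)
    (hNpos : 0 < N) (hK : ((Finset.univ.filter fun i => cf i ≠ 0).card : ℝ) ≤ K) :
    ∃ i, N / K ≤ cf i ^ 2 := by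
  set S := Finset.univ.filter fun i => cf i ≠ 0 with hS
  have hsum : ∑ i ∈ S, cf i ^ 2 = N := by
    rw [hS, Finset.sum_filter_of_ne (fun i _ hi => ?_), hN]
    intro h; rw [h] at hi; simp at hi
  have hSne : S.Nonempty := by
    by_contra h
    rw [Finset.not_nonempty_iff_eq_empty] at h
    rw [h, Finset.sum_empty] at hsum
    exact hNpos.ne hsum
  have hcard : (0:ℝ) < (S.card : ℝ) := by
    exact_mod_cast Finset.card_pos.mpr hSne
  have hle : ∑ i ∈ S, N / (S.card : ℝ) ≤ ∑ i ∈ S, cf i ^ 2 := by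
    rw [Finset.sum_const, nsmul_eq_mul, hsum, mul_div_cancel₀ _ hcard.ne']
  obtain ⟨i, _, hi⟩ := Finset.exists_le_of_sum_le hSne hle
  exact ⟨i, le_trans (div_le_div_of_nonneg_left hNpos.le hcard hK) hi⟩

lemma sqrt_tendsto_atTop' : Tendsto Real.sqrt atTop atTop := by
  rw [tendsto_atTop_atTop]
  intro b
  refine ⟨b ^ 2, fun x hx => ?_⟩
  calc b ≤ |b| := le_abs_self b
    _ = Real.sqrt (b ^ 2) := (Real.sqrt_sq_eq_abs b).symm
    _ ≤ Real.sqrt x := Real.sqrt_le_sqrt hx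

/-- **Theorem 3.** Suppose for each `p` the nonzero binary pattern `x⁽ᵖ⁾`
has canonical sparsity `‖x⁽ᵖ⁾‖₀ ≥ c₁ p^{1-α}`, the orthogonal matrix `B_p` gives transform
sparsity `‖B_pᵀ x⁽ᵖ⁾‖₀ ≤ c₂ (log_d p)² p^{1-β}` (with `0 < α < β ≤ 1`), and
`y = μ_p x⁽ᵖ⁾ + ε` with `ε` i.i.d. `N(0,σ²)`.  For the max-statistic test with threshold
`t_p = √(2σ²(1+c) log p)`, the false-alarm probability tends to `0`, and if
`μ_p ≥ p^{-κ'} √(2σ² log p)` for some `κ' ∈ (0,(β-α)/2)`, the miss probability also tends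
to `0`: signals polynomially weaker than the canonical threshold `√(2σ² log p)` are
reliably detected. -/
theorem weak_structured_signal_detection (d : ℕ) (hd : 2 ≤ d)
    (α β σ c₁ c₂ c κ' : ℝ)
    (hα : 0 < α) (hαβ : α < β) (hβ : β ≤ 1) (hσ : 0 < σ)
    (hc₁ : 0 < c₁) (hc₂ : 0 < c₂) (hc : 0 < c)
    (hκ'0 : 0 < κ') (hκ' : κ' < (β - α) / 2)
    (Ω : ℕ → Type) (mΩ : ∀ p, MeasurableSpace (Ω p)) (μ : ∀ p, Measure (Ω p))
    (hprob : ∀ p, IsProbabilityMeasure (μ p))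
    (ε : ∀ p : ℕ, Fin p → Ω p → ℝ) (hmeas : ∀ p i, Measurable (ε p i))
    (hindep : ∀ p, iIndepFun (ε p) (μ p))
    (hdist : ∀ p i, Measure.map (ε p i) (μ p) = gaussianReal 0 ⟨σ ^ 2, sq_nonneg σ⟩)
    (x : ∀ p : ℕ, Fin p → ℝ) (hx01 : ∀ p i, x p i = 0 ∨ x p i = 1)
    (hxlb : ∀ p : ℕ, 1 ≤ p →
      c₁ * (p : ℝ) ^ (1 - α) ≤ ((Finset.univ.filter fun i => x p i ≠ 0).card : ℝ))
    (B : ∀ p : ℕ, Matrix (Fin p) (Fin p) ℝ) (hB : ∀ p, (B p).transpose * B p = 1)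
    (hBx : ∀ p : ℕ, 2 ≤ p →
      ((Finset.univ.filter fun i => (∑ j, B p j i * x p j) ≠ 0).card : ℝ) ≤
        c₂ * (Real.log p / Real.log d) ^ 2 * (p : ℝ) ^ (1 - β))
    (μsig : ℕ → ℝ)
    (hμsig : ∀ p : ℕ, 2 ≤ p →
      (p : ℝ) ^ (-κ') * Real.sqrt (2 * σ ^ 2 * Real.log p) ≤ μsig p) :
    Tendsto (fun p : ℕ =>
        μ p {ω | Real.sqrt (2 * σ ^ 2 * (1 + c) * Real.log p) <
            ⨆ i : Fin p, |∑ j, B p j i * ε p j ω|}) atTop (nhds 0) ∧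
    Tendsto (fun p : ℕ =>
        μ p {ω | (⨆ i : Fin p, |∑ j, B p j i * (μsig p * x p j + ε p j ω)|) ≤
            Real.sqrt (2 * σ ^ 2 * (1 + c) * Real.log p)}) atTop (nhds 0) := by
  have hd1 : (1:ℝ) < (d:ℝ) := by exact_mod_cast hd.trans_lt' one_lt_two
  have hlogd : 0 < Real.log d := Real.log_pos hd1
  -- FALSE ALARM PART
  have part1 : Tendsto (fun p : ℕ =>
      μ p {ω | Real.sqrt (2 * σ ^ 2 * (1 + c) * Real.log p) <
          ⨆ i : Fin p, |∑ j, B p j i * ε p j ω|}) atTop (nhds 0) := by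
    have hbnd : ∀ᶠ p : ℕ in atTop,
        μ p {ω | Real.sqrt (2 * σ ^ 2 * (1 + c) * Real.log p) <
            ⨆ i : Fin p, |∑ j, B p j i * ε p j ω|}
          ≤ ENNReal.ofReal (2 * (p:ℝ) ^ (-c)) := by
      filter_upwards [eventually_ge_atTop 2] with p hp
      haveI := hprob p
      haveI : Nonempty (Fin p) := ⟨⟨0, by omega⟩⟩
      have hp0 : (0:ℝ) < p := by positivity
      have hp1 : (1:ℝ) < p := by exact_mod_cast hp.trans_lt' one_lt_two
      have hlogp : 0 < Real.log p := Real.log_pos hp1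
      set tp : ℝ := Real.sqrt (2 * σ ^ 2 * (1 + c) * Real.log p) with htp
      have htp0 : 0 ≤ tp := Real.sqrt_nonneg _
      have hsub : {ω | tp < ⨆ i : Fin p, |∑ j, B p j i * ε p j ω|}
          ⊆ ⋃ i : Fin p, {ω | tp ≤ |∑ j, B p j i * ε p j ω|} := by
        intro ω hω
        simp only [Set.mem_setOf_eq] at hω
        obtain ⟨i, hi⟩ := (lt_ciSup_iff (Set.Finite.bddAbove (Set.finite_range _))).mp hω
        exact Set.mem_iUnion.mpr ⟨i, hi.le⟩
      have hcol : ∀ i : Fin p, ∑ j, (B p j i) ^ 2 = 1 := col_norm (B p) (hB p)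
      have hbd : ∀ i : Fin p, μ p {ω | tp ≤ |∑ j, B p j i * ε p j ω|}
          ≤ ENNReal.ofReal (2 * Real.exp (-tp ^ 2 / (2 * σ ^ 2))) := fun i =>
        tail_abs hσ (hmeas p) (hindep p) (hdist p) (fun j => B p j i) (hcol i) htp0
      have hval : (p:ℝ) * (2 * Real.exp (-tp ^ 2 / (2 * σ ^ 2))) = 2 * (p:ℝ) ^ (-c) := by
        have hsq : tp ^ 2 = 2 * σ ^ 2 * (1 + c) * Real.log p :=
          Real.sq_sqrt (by positivity)
        have harg : -tp ^ 2 / (2 * σ ^ 2) = Real.log p * (-(1+c)) := by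
          rw [hsq]; field_simp
        rw [harg, ← Real.rpow_def_of_pos hp0]
        have : (p:ℝ) * (p:ℝ) ^ (-(1+c)) = (p:ℝ) ^ (-c) := by
          rw [← Real.rpow_one_add' hp0.le (by intro h; nlinarith)]
          norm_num
        rw [← this]; ring
      calc μ p {ω | tp < ⨆ i : Fin p, |∑ j, B p j i * ε p j ω|}
          ≤ μ p (⋃ i : Fin p, {ω | tp ≤ |∑ j, B p j i * ε p j ω|}) := measure_mono hsub
        _ ≤ ∑' i : Fin p, μ p {ω | tp ≤ |∑ j, B p j i * ε p j ω|} := measure_iUnion_le _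
        _ = ∑ i : Fin p, μ p {ω | tp ≤ |∑ j, B p j i * ε p j ω|} := tsum_fintype _
        _ ≤ ∑ _i : Fin p, ENNReal.ofReal (2 * Real.exp (-tp ^ 2 / (2 * σ ^ 2))) :=
            Finset.sum_le_sum fun i _ => hbd i
        _ = (p : ℝ≥0∞) * ENNReal.ofReal (2 * Real.exp (-tp ^ 2 / (2 * σ ^ 2))) := by
            rw [Finset.sum_const, Finset.card_univ, Fintype.card_fin, nsmul_eq_mul]
        _ = ENNReal.ofReal ((p:ℝ) * (2 * Real.exp (-tp ^ 2 / (2 * σ ^ 2)))) := by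
            rw [ENNReal.ofReal_mul (Nat.cast_nonneg p), ENNReal.ofReal_natCast]
        _ = ENNReal.ofReal (2 * (p:ℝ) ^ (-c)) := by rw [hval]
    have hbnd0 : Tendsto (fun p : ℕ => ENNReal.ofReal (2 * (p:ℝ) ^ (-c)))
        atTop (nhds 0) := by
      have : Tendsto (fun p : ℕ => 2 * (p:ℝ) ^ (-c)) atTop (nhds (2 * 0)) :=
        (((tendsto_rpow_neg_atTop hc).comp tendsto_natCast_atTop_atTop).const_mul 2)
      rw [mul_zero] at this
      simpa using ENNReal.tendsto_ofReal this
    exact tendsto_of_tendsto_of_tendsto_of_le_of_le' tendsto_const_nhds hbnd0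
      (Eventually.of_forall fun p => zero_le) hbnd
  refine ⟨part1, ?_⟩
  -- MISS PART
  have hδ' : (0:ℝ) < (β - α) / 2 - κ' := by linarith
  set q : ℕ → ℝ := fun p => (c₁ * (p:ℝ) ^ (1 - α)) /
      (c₂ * (Real.log p / Real.log d) ^ 2 * (p:ℝ) ^ (1 - β)) with hq
  set w : ℕ → ℝ := fun p => (p:ℝ) ^ (-κ') * Real.sqrt (2 * σ ^ 2 * Real.log p) *
      Real.sqrt (q p) - Real.sqrt (2 * σ ^ 2 * (1 + c) * Real.log p) with hw
  have hwtop : Tendsto w atTop atTop := by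
    have htail : Tendsto (fun p : ℕ => (p:ℝ) ^ ((β - α) / 2 - κ') / Real.log p)
        atTop atTop := by
      have hT1 : Tendsto (fun p : ℕ => (p:ℝ) ^ (((β - α) / 2 - κ') / 2)) atTop atTop :=
        (tendsto_rpow_atTop (by positivity)).comp tendsto_natCast_atTop_atTop
      have hev : ∀ᶠ y : ℝ in atTop, Real.log y ≤ y ^ (((β - α) / 2 - κ') / 2) := by
        filter_upwards [(isLittleO_log_rpow_atTop
          (by positivity : (0:ℝ) < ((β - α) / 2 - κ') / 2)).def one_pos,
          eventually_ge_atTop (0:ℝ)] with y hy hy0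
        calc Real.log y ≤ ‖Real.log y‖ := le_abs_self _
          _ ≤ 1 * ‖y ^ (((β - α) / 2 - κ') / 2)‖ := hy
          _ = y ^ (((β - α) / 2 - κ') / 2) := by
              rw [one_mul, Real.norm_eq_abs, abs_of_nonneg (Real.rpow_nonneg hy0 _)]
      apply tendsto_atTop_mono' atTop ?_ hT1
      filter_upwards [eventually_ge_atTop 2, tendsto_natCast_atTop_atTop.eventually hev]
        with p hp hlog
      have hp0 : (0:ℝ) < p := by positivity
      have hp1 : (1:ℝ) < p := by exact_mod_cast hp.trans_lt' one_lt_two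
      have hlogp : 0 < Real.log p := Real.log_pos hp1
      have h1 : (p:ℝ) ^ (((β - α) / 2 - κ') / 2)
          = (p:ℝ) ^ ((β - α) / 2 - κ') / (p:ℝ) ^ (((β - α) / 2 - κ') / 2) := by
        rw [eq_div_iff (ne_of_gt (Real.rpow_pos_of_pos hp0 _)), ← Real.rpow_add hp0]
        congr 1; ring
      rw [h1]
      exact div_le_div_of_nonneg_left (Real.rpow_nonneg hp0.le _) hlogp hlog
    have hrtop : Tendsto (fun p : ℕ => (p:ℝ) ^ (-κ') * Real.sqrt (q p)) atTop atTop := by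
      have hcpos : 0 < Real.sqrt (c₁ / c₂) * Real.log d :=
        mul_pos (Real.sqrt_pos.mpr (by positivity)) hlogd
      refine Tendsto.congr' ?_ (htail.const_mul_atTop hcpos)
      filter_upwards [eventually_ge_atTop 2] with p hp
      have hp0 : (0:ℝ) < p := by positivity
      have hp1 : (1:ℝ) < p := by exact_mod_cast hp.trans_lt' one_lt_two
      have hlogp : 0 < Real.log p := Real.log_pos hp1
      have hp1' : Real.log p ≠ 0 := (Real.log_pos hp1).ne'
      have hlogd' : Real.log d ≠ 0 := hlogd.ne'
      have h1 : ((p:ℝ) ^ ((β - α) / 2)) ^ 2 = (p:ℝ) ^ (β - α) := by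
        rw [← Real.rpow_natCast ((p:ℝ) ^ ((β - α) / 2)) 2, ← Real.rpow_mul hp0.le]
        norm_num
      have h2 : (p:ℝ) ^ (β - α) * (p:ℝ) ^ (1 - β) = (p:ℝ) ^ (1 - α) := by
        rw [← Real.rpow_add hp0]; ring_nf
      have h3 : Real.sqrt (c₁ / c₂) ^ 2 = c₁ / c₂ := Real.sq_sqrt (by positivity)
      have hE0 : (0:ℝ) ≤ Real.sqrt (c₁ / c₂) * Real.log d * (p:ℝ) ^ ((β - α) / 2)
          / Real.log p := by
        apply div_nonneg _ hlogp.le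
        exact mul_nonneg (mul_nonneg (Real.sqrt_nonneg _) hlogd.le)
          (Real.rpow_nonneg hp0.le _)
      have hq2 : (Real.sqrt (c₁ / c₂) * Real.log d * (p:ℝ) ^ ((β - α) / 2)
          / Real.log p) ^ 2 = q p := by
        simp only [hq]
        rw [← h2, div_pow, mul_pow, mul_pow, h3, h1, div_pow]
        have hpb : ((p:ℝ) ^ (1 - β)) ≠ 0 := (Real.rpow_pos_of_pos hp0 _).ne'
        field_simp
      rw [← hq2, Real.sqrt_sq hE0]
      have h4 : (p:ℝ) ^ (-κ') * (p:ℝ) ^ ((β - α) / 2) = (p:ℝ) ^ ((β - α) / 2 - κ') := by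
        rw [← Real.rpow_add hp0]; congr 1; ring
      rw [← h4]; ring
    have hsl : Tendsto (fun p : ℕ => Real.sqrt (2 * σ ^ 2 * Real.log p)) atTop atTop :=
      sqrt_tendsto_atTop'.comp ((Real.tendsto_log_atTop.const_mul_atTop
        (by positivity : (0:ℝ) < 2 * σ ^ 2)).comp tendsto_natCast_atTop_atTop)
    have hprod := hsl.atTop_mul_atTop₀
      (tendsto_atTop_add_const_right atTop (-(Real.sqrt (1 + c))) hrtop)
    refine Tendsto.congr' ?_ hprod
    filter_upwards [eventually_ge_atTop 2] with p hp
    have hp1 : (1:ℝ) < p := by exact_mod_cast hp.trans_lt' one_lt_two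
    have hlogp : 0 ≤ Real.log p := (Real.log_pos hp1).le
    have hts : Real.sqrt (2 * σ ^ 2 * (1 + c) * Real.log p)
        = Real.sqrt (2 * σ ^ 2 * Real.log p) * Real.sqrt (1 + c) := by
      rw [← Real.sqrt_mul (by positivity)]
      congr 1; ring
    rw [hw]
    simp only
    rw [hts]; ring
  have hw0 : ∀ᶠ p : ℕ in atTop, 0 ≤ w p := hwtop.eventually_ge_atTop 0
  have hbnd : ∀ᶠ p : ℕ in atTop,
      μ p {ω | (⨆ i : Fin p, |∑ j, B p j i * (μsig p * x p j + ε p j ω)|) ≤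
          Real.sqrt (2 * σ ^ 2 * (1 + c) * Real.log p)}
        ≤ ENNReal.ofReal (2 * Real.exp (-(w p) ^ 2 / (2 * σ ^ 2))) := by
    filter_upwards [eventually_ge_atTop 2, hw0] with p hp hw0p
    haveI := hprob p
    haveI : Nonempty (Fin p) := ⟨⟨0, by omega⟩⟩
    have hp0 : (0:ℝ) < p := by positivity
    have hp1 : (1:ℝ) < p := by exact_mod_cast hp.trans_lt' one_lt_two
    have hlogp : 0 < Real.log p := Real.log_pos hp1
    set cf : Fin p → ℝ := fun i => ∑ j, B p j i * x p j with hcf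
    have hsumsq : ∑ i, cf i ^ 2
        = ((Finset.univ.filter fun i => x p i ≠ 0).card : ℝ) :=
      sumsq_coeff (B p) (hB p) (x p) (hx01 p)
    have hNlb := hxlb p (by omega)
    have hNpos : (0:ℝ) < ((Finset.univ.filter fun i => x p i ≠ 0).card : ℝ) :=
      lt_of_lt_of_le (by positivity) hNlb
    have hKpos : 0 < c₂ * (Real.log p / Real.log d) ^ 2 * (p:ℝ) ^ (1 - β) :=
      mul_pos (mul_pos hc₂ (pow_pos (div_pos hlogp hlogd) 2)) (Real.rpow_pos_of_pos hp0 _)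
    obtain ⟨i0, hi0⟩ := exists_big_coeff cf hsumsq hNpos (hBx p hp)
    have hqle : q p ≤ cf i0 ^ 2 := by
      refine le_trans ?_ hi0
      simp only [hq]
      gcongr
    have hsqle : Real.sqrt (q p) ≤ |cf i0| := by
      rw [← Real.sqrt_sq_eq_abs]
      exact Real.sqrt_le_sqrt hqle
    have hμ0 : (0:ℝ) ≤ (p:ℝ) ^ (-κ') * Real.sqrt (2 * σ ^ 2 * Real.log p) := by positivity
    have hμs := hμsig p hp
    have hμspos : 0 ≤ μsig p := le_trans hμ0 hμs
    have hwle : w p ≤ μsig p * |cf i0| - Real.sqrt (2 * σ ^ 2 * (1 + c) * Real.log p) := by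
      have hmm := mul_le_mul hμs hsqle (Real.sqrt_nonneg _) hμspos
      simp only [hw]
      linarith
    have hsub : {ω | (⨆ i : Fin p, |∑ j, B p j i * (μsig p * x p j + ε p j ω)|) ≤
          Real.sqrt (2 * σ ^ 2 * (1 + c) * Real.log p)}
        ⊆ {ω | w p ≤ |∑ j, B p j i0 * ε p j ω|} := by
      intro ω hω
      simp only [Set.mem_setOf_eq] at hω ⊢
      have hterm : |∑ j, B p j i0 * (μsig p * x p j + ε p j ω)|
          ≤ Real.sqrt (2 * σ ^ 2 * (1 + c) * Real.log p) :=
        le_trans (le_ciSup (f := fun i : Fin p =>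
          |∑ j, B p j i * (μsig p * x p j + ε p j ω)|)
          (Set.Finite.bddAbove (Set.finite_range _)) i0) hω
      have hdec : ∑ j, B p j i0 * (μsig p * x p j + ε p j ω)
          = μsig p * cf i0 + ∑ j, B p j i0 * ε p j ω := by
        rw [hcf]
        simp only
        rw [Finset.mul_sum, ← Finset.sum_add_distrib]
        exact Finset.sum_congr rfl fun j _ => by ring
      rw [hdec] at hterm
      have h1 := abs_sub_abs_le_abs_sub (μsig p * cf i0)
        (μsig p * cf i0 + ∑ j, B p j i0 * ε p j ω)
      have h2 : μsig p * cf i0 - (μsig p * cf i0 + ∑ j, B p j i0 * ε p j ω)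
          = -(∑ j, B p j i0 * ε p j ω) := by ring
      rw [h2, abs_neg, abs_mul, abs_of_nonneg hμspos] at h1
      linarith
    refine le_trans (measure_mono hsub) ?_
    exact tail_abs hσ (hmeas p) (hindep p) (hdist p) (fun j => B p j i0)
      (col_norm (B p) (hB p) i0) hw0p
  have hbnd0 : Tendsto (fun p : ℕ => ENNReal.ofReal (2 * Real.exp (-(w p) ^ 2 / (2 * σ ^ 2))))
      atTop (nhds 0) := by
    have h2 : Tendsto (fun p : ℕ => (w p) ^ 2 / (2 * σ ^ 2)) atTop atTop := by
      have := (hwtop.atTop_mul_atTop₀ hwtop).atTop_div_const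
        (by positivity : (0:ℝ) < 2 * σ ^ 2)
      refine Tendsto.congr (fun p => ?_) this
      ring
    have h3 : Tendsto (fun p : ℕ => Real.exp (-(w p) ^ 2 / (2 * σ ^ 2))) atTop (nhds 0) := by
      have := Real.tendsto_exp_atBot.comp (tendsto_neg_atTop_atBot.comp h2)
      refine Tendsto.congr (fun p => ?_) this
      simp [Function.comp, neg_div]
    have h4 : Tendsto (fun p : ℕ => 2 * Real.exp (-(w p) ^ 2 / (2 * σ ^ 2)))
        atTop (nhds (2 * 0)) := h3.const_mul 2
    rw [mul_zero] at h4
    simpa using ENNReal.tendsto_ofReal h4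
  exact tendsto_of_tendsto_of_tendsto_of_le_of_le' tendsto_const_nhds hbnd0
    (Eventually.of_forall fun p => zero_le) hbnd
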